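/- For every x ∈ J_β and every expansion x = Σ_{i=1}^∞ a_i/β^i with digits a_i ∈ {0,1,...,⌊β⌋}, there exists ω ∈ {0,1}^ℕ such that a_i = d_i(ω,x) for all i ≥ 1; i.e., every β-expansion of x is generated by the random map K_β for some sequence of coin flips. -/

import Mathlib

open MeasureTheory Set
open scoped Classical

/-- The interval `J_β = [0, ⌊β⌋/(β-1)]`. -/
noncomputable def Jbeta (β : ℝ) : Set ℝ := Set.Icc 0 ((⌊β⌋ : ℝ) / (β - 1))

/-- The greedy digit of `x` in base `β`: equals `j` iff `x ∈ C(j)`, where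
`C(j) = [j/β, (j+1)/β)` for `j < ⌊β⌋` and `C(⌊β⌋) = [⌊β⌋/β, ⌊β⌋/(β-1)]`. -/
noncomputable def gdigit (β x : ℝ) : ℤ := min ⌊β * x⌋ ⌊β⌋

/-- The greedy map `T_β(x) = βx - d` for `x ∈ C(d)`. -/
noncomputable def gmap (β x : ℝ) : ℝ := β * x - gdigit β x

/-- The reflection `ℓ(x) = ⌊β⌋/(β-1) - x`. -/
noncomputable def lref (β x : ℝ) : ℝ := (⌊β⌋ : ℝ) / (β - 1) - x

/-- The lazy digit: the `d` with `x ∈ Δ(d) = ℓ(C(⌊β⌋ - d))`. -/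
noncomputable def ldigit (β x : ℝ) : ℤ := ⌊β⌋ - gdigit β (lref β x)

/-- The lazy map `L_β(x) = βx - d` for `x ∈ Δ(d)`. -/
noncomputable def lmap (β x : ℝ) : ℝ := β * x - ldigit β x

/-- Membership in the union of the switch regions
`S_k = [k/β, ⌊β⌋/(β(β-1)) + (k-1)/β]`, `k = 1, …, ⌊β⌋`. -/
def inSwitch (β x : ℝ) : Prop :=
  ∃ k : ℤ, 1 ≤ k ∧ k ≤ ⌊β⌋ ∧ (k : ℝ) / β ≤ x ∧
    x ≤ (⌊β⌋ : ℝ) / (β * (β - 1)) + ((k : ℝ) - 1) / β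

/-- The digit `d_1(ω,x)` assigned by the random map: the greedy digit, unless `x` is
in a switch region and the first coin is `0` (tails), in which case the lazy digit. -/
noncomputable def rdigit (β : ℝ) (ω : ℕ → Bool) (x : ℝ) : ℤ :=
  if inSwitch β x ∧ ω 0 = false then ldigit β x else gdigit β x

/-- The random β-expansion map `K_β` on `Ω × J_β`, `Ω = {0,1}^ℕ`: the coin sequence is
shifted exactly when `x` lies in a switch region. -/
noncomputable def kmap (β : ℝ) (p : (ℕ → Bool) × ℝ) : (ℕ → Bool) × ℝ :=
  ((if inSwitch β p.2 then (fun n => p.1 (n + 1)) else p.1),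
    β * p.2 - rdigit β p.1 p.2)

/-- The digit `d_{n+1}(ω,x) = d_1(K_β^n(ω,x))` of the random β-expansion. -/
noncomputable def rdig (β : ℝ) (n : ℕ) (ω : ℕ → Bool) (x : ℝ) : ℤ :=
  rdigit β ((kmap β)^[n] (ω, x)).1 ((kmap β)^[n] (ω, x)).2

section
variable {β : ℝ} (hβ : 1 < β) (hni : ¬ ∃ n : ℤ, β = (n : ℝ))
include hβ

lemma floor_lt_self (hni : ¬ ∃ n : ℤ, β = (n : ℝ)) : (⌊β⌋ : ℝ) < β := by
  rcases lt_or_eq_of_le (Int.floor_le β) with h | h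
  · exact h
  · exact absurd ⟨⌊β⌋, h.symm⟩ hni

lemma ldigit_eq (x : ℝ) : ldigit β x = max ⌈β * x - (⌊β⌋ : ℝ) / (β - 1)⌉ 0 := by
  have hβ1 : β - 1 ≠ 0 := by linarith
  have hkey : β * lref β x = (⌊β⌋ : ℝ) + ((⌊β⌋ : ℝ) / (β - 1) - β * x) := by
    have hM : (β - 1) * ((⌊β⌋ : ℝ) / (β - 1)) = ⌊β⌋ := by field_simp
    rw [lref]; linear_combination hM
  rw [ldigit, gdigit, hkey, Int.floor_intCast_add]
  have : ⌈β * x - (⌊β⌋ : ℝ) / (β - 1)⌉ = -⌊(⌊β⌋ : ℝ) / (β - 1) - β * x⌋ := by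
    rw [← Int.ceil_neg]; ring_nf
  rw [this]
  omega

lemma ldigit_le {x : ℝ} {d : ℤ} (h1 : β * x - (⌊β⌋ : ℝ) / (β - 1) ≤ (d : ℝ)) (h2 : 0 ≤ d) :
    ldigit β x ≤ d := by
  rw [ldigit_eq hβ]
  exact max_le (Int.ceil_le.2 h1) h2

lemma le_gdigit {x : ℝ} {d : ℤ} (h1 : (d : ℝ) ≤ β * x) (h2 : d ≤ ⌊β⌋) :
    d ≤ gdigit β x := le_min (Int.le_floor.2 h1) h2

lemma gdigit_le_ldigit_add_one (hni : ¬ ∃ n : ℤ, β = (n : ℝ)) (x : ℝ) :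
    gdigit β x ≤ ldigit β x + 1 := by
  have hn1 : 1 ≤ ⌊β⌋ := by exact_mod_cast Int.le_floor.2 (by exact_mod_cast hβ.le)
  rw [ldigit_eq hβ]
  set M : ℝ := (⌊β⌋ : ℝ) / (β - 1) with hM
  by_cases hc : ⌊β * x⌋ ≤ ⌈β * x - M⌉ + 1
  · calc gdigit β x ≤ ⌊β * x⌋ := min_le_left _ _
      _ ≤ ⌈β * x - M⌉ + 1 := hc
      _ ≤ max ⌈β * x - M⌉ 0 + 1 := by omega
  · -- then M ≥ 2, so ⌊β⌋ = 1
    push_neg at hc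
    have h1 : (⌈β * x - M⌉ : ℝ) ≤ ⌊β * x⌋ - 2 := by exact_mod_cast (by omega : ⌈β * x - M⌉ ≤ ⌊β * x⌋ - 2)
    have h2 : β * x - M ≤ β * x - 2 := by
      have := Int.le_ceil (β * x - M)
      have := Int.floor_le (β * x)
      linarith
    have hM2 : 2 ≤ M := by linarith
    have hβ1 : 0 < β - 1 := by linarith
    have hfl : (⌊β⌋ : ℝ) < β := floor_lt_self hβ hni
    have : (⌊β⌋ : ℝ) < 2 := by
      have : 2 * (β - 1) ≤ (⌊β⌋ : ℝ) := by
        rw [hM, le_div_iff₀ hβ1] at hM2; linarith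
      nlinarith
    have hn2 : ⌊β⌋ = 1 := by
      have h3 : ⌊β⌋ < 2 := by exact_mod_cast this
      omega
    calc gdigit β x ≤ ⌊β⌋ := min_le_right _ _
      _ = 1 := hn2
      _ ≤ max ⌈β * x - M⌉ 0 + 1 := by omega

lemma switch_of_lt {x : ℝ} (h : ldigit β x < gdigit β x) : inSwitch β x := by
  have hβ0 : 0 < β := by linarith
  have hl0 : 0 ≤ ldigit β x := by rw [ldigit_eq hβ]; omega
  refine ⟨gdigit β x, by omega, min_le_right _ _, ?_, ?_⟩
  · rw [div_le_iff₀ hβ0]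
    have : (gdigit β x : ℝ) ≤ ⌊β * x⌋ := by exact_mod_cast min_le_left ⌊β * x⌋ ⌊β⌋
    have := Int.floor_le (β * x)
    linarith
  · have hceil : ⌈β * x - (⌊β⌋ : ℝ) / (β - 1)⌉ ≤ gdigit β x - 1 := by
      have := ldigit_eq hβ (x := x); omega
    have h1 : β * x - (⌊β⌋ : ℝ) / (β - 1) ≤ (gdigit β x : ℝ) - 1 := by
      have := Int.le_ceil (β * x - (⌊β⌋ : ℝ) / (β - 1))
      exact_mod_cast le_trans this (by exact_mod_cast hceil)
    have hβ1 : 0 < β - 1 := by linarith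
    rw [← sub_le_iff_le_add', le_div_iff₀ hβ0]
    have he : (⌊β⌋ : ℝ) / (β * (β - 1)) * β = (⌊β⌋ : ℝ) / (β - 1) := by
      field_simp
    nlinarith [h1]

end

section
variable {β : ℝ} (hβ : 1 < β)
include hβ

lemma tail_summable {a : ℕ → ℤ} (ha : ∀ i, 0 ≤ a i ∧ a i ≤ ⌊β⌋) (m : ℕ) :
    Summable (fun i : ℕ => (a (m + i) : ℝ) / β ^ (i + 1)) := by
  have hβ0 : 0 < β := by linarith
  have hr0 : (0:ℝ) ≤ β⁻¹ := by positivity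
  have hr1 : β⁻¹ < 1 := inv_lt_one_of_one_lt₀ hβ
  apply Summable.of_nonneg_of_le (f := fun i : ℕ => (⌊β⌋ : ℝ) * β⁻¹ * β⁻¹ ^ i)
  · intro i
    have := (ha (m + i)).1
    positivity
  · intro i
    have h1 : (a (m + i) : ℝ) ≤ (⌊β⌋ : ℝ) := by exact_mod_cast (ha (m + i)).2
    have h2 : (0:ℝ) < β ^ (i + 1) := by positivity
    have he : (⌊β⌋ : ℝ) * β⁻¹ * β⁻¹ ^ i = (⌊β⌋ : ℝ) / β ^ (i + 1) := by
      rw [inv_pow, mul_assoc, ← mul_inv, ← pow_succ', div_eq_mul_inv]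
    rw [he]
    gcongr
  · exact (summable_geometric_of_lt_one hr0 hr1).mul_left _

lemma tail_mem {a : ℕ → ℤ} (ha : ∀ i, 0 ≤ a i ∧ a i ≤ ⌊β⌋) (m : ℕ) :
    (∑' i : ℕ, (a (m + i) : ℝ) / β ^ (i + 1)) ∈ Jbeta β := by
  have hβ0 : 0 < β := by linarith
  have hr0 : (0:ℝ) ≤ β⁻¹ := by positivity
  have hr1 : β⁻¹ < 1 := inv_lt_one_of_one_lt₀ hβ
  constructor
  · apply tsum_nonneg
    intro i
    have := (ha (m + i)).1
    positivity
  · have h1 : (∑' i : ℕ, (a (m + i) : ℝ) / β ^ (i + 1)) ≤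
        ∑' i : ℕ, (⌊β⌋ : ℝ) * β⁻¹ * β⁻¹ ^ i := by
      apply Summable.tsum_le_tsum _ (tail_summable hβ ha m) ((summable_geometric_of_lt_one hr0 hr1).mul_left _)
      intro i
      have h1 : (a (m + i) : ℝ) ≤ (⌊β⌋ : ℝ) := by exact_mod_cast (ha (m + i)).2
      have h2 : (0:ℝ) < β ^ (i + 1) := by positivity
      have he : (⌊β⌋ : ℝ) * β⁻¹ * β⁻¹ ^ i = (⌊β⌋ : ℝ) / β ^ (i + 1) := by
        rw [inv_pow, mul_assoc, ← mul_inv, ← pow_succ', div_eq_mul_inv]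
      rw [he]
      gcongr
    rw [tsum_mul_left, tsum_geometric_of_lt_one hr0 hr1] at h1
    have he : (⌊β⌋ : ℝ) * β⁻¹ * (1 - β⁻¹)⁻¹ = (⌊β⌋ : ℝ) / (β - 1) := by
      have : (1:ℝ) - β⁻¹ = (β - 1)/β := by field_simp
      rw [this]
      field_simp
    rw [he] at h1
    exact h1

lemma tail_rec {a : ℕ → ℤ} (ha : ∀ i, 0 ≤ a i ∧ a i ≤ ⌊β⌋) (m : ℕ) :
    β * (∑' i : ℕ, (a (m + i) : ℝ) / β ^ (i + 1)) =
      (a m : ℝ) + ∑' i : ℕ, (a (m + 1 + i) : ℝ) / β ^ (i + 1) := by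
  have hβ0 : (0:ℝ) < β := by linarith
  have hs : Summable (fun i : ℕ => (a (m + i) : ℝ) / β ^ i) := by
    apply ((tail_summable hβ ha m).mul_left β).congr
    intro i
    rw [pow_succ]
    field_simp
  calc β * (∑' i : ℕ, (a (m + i) : ℝ) / β ^ (i + 1))
      = ∑' i : ℕ, (a (m + i) : ℝ) / β ^ i := by
        rw [← tsum_mul_left]
        apply tsum_congr
        intro i
        rw [pow_succ]
        field_simp
    _ = (a (m + 0) : ℝ) / β ^ 0 + ∑' i : ℕ, (a (m + (i + 1)) : ℝ) / β ^ (i + 1) :=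
        Summable.tsum_eq_zero_add hs
    _ = (a m : ℝ) + ∑' i : ℕ, (a (m + 1 + i) : ℝ) / β ^ (i + 1) := by
        rw [Nat.add_zero, pow_zero, div_one]
        congr 1
        apply tsum_congr
        intro i
        rw [show m + (i + 1) = m + 1 + i by omega]

end


lemma digit_cases {β : ℝ} (hβ : 1 < β) (hni : ¬ ∃ n : ℤ, β = (n : ℝ)) {x : ℝ} {d : ℤ}
    (hd0 : 0 ≤ d) (hd1 : d ≤ ⌊β⌋) (hx' : β * x - d ∈ Jbeta β) :
    (¬ inSwitch β x → d = gdigit β x) ∧ (d = ldigit β x ∨ d = gdigit β x) := by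
  obtain ⟨h1, h2⟩ := hx'
  have hg : d ≤ gdigit β x := le_gdigit hβ (by linarith) hd1
  have hl : ldigit β x ≤ d := ldigit_le hβ (by linarith) hd0
  have hgl : gdigit β x ≤ ldigit β x + 1 := gdigit_le_ldigit_add_one hβ hni x
  constructor
  · intro hns
    have : ¬ (ldigit β x < gdigit β x) := fun h => hns (switch_of_lt hβ h)
    omega
  · omega

/-- every β-expansion of `x ∈ J_β` with digits in `{0,…,⌊β⌋}` is produced
by the random map `K_β` for some coin sequence `ω`. -/
theorem all_expansions_attained (β : ℝ) (hβ : 1 < β) (hni : ¬ ∃ n : ℤ, β = (n : ℝ)) :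
    ∀ x ∈ Jbeta β, ∀ a : ℕ → ℤ, (∀ i, 0 ≤ a i ∧ a i ≤ ⌊β⌋) →
      x = ∑' i : ℕ, (a i : ℝ) / β ^ (i + 1) →
      ∃ ω : ℕ → Bool, ∀ i, a i = rdig β i ω x := by
  intro x hx a ha hsum
  set y : ℕ → ℝ := fun m => ∑' i : ℕ, (a (m + i) : ℝ) / β ^ (i + 1) with hy
  have hy0 : y 0 = x := by
    rw [hsum]; exact tsum_congr fun i => by rw [Nat.zero_add]
  have hrec : ∀ m, β * y m = a m + y (m + 1) := fun m => tail_rec hβ ha m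
  have hdig : ∀ m, (¬ inSwitch β (y m) → a m = gdigit β (y m)) ∧
      (a m = ldigit β (y m) ∨ a m = gdigit β (y m)) := by
    intro m
    apply digit_cases hβ hni (ha m).1 (ha m).2
    have h : β * y m - a m = y (m + 1) := by linarith [hrec m]
    rw [h]
    exact tail_mem hβ ha (m + 1)
  set s : ℕ → ℕ := fun m => ∑ j ∈ Finset.range m, (if inSwitch β (y j) then 1 else 0) with hs
  have hs0 : s 0 = 0 := Finset.sum_range_zero _
  have hssucc : ∀ m, s (m + 1) = s m + (if inSwitch β (y m) then 1 else 0) :=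
    fun m => Finset.sum_range_succ _ m
  have hsmono : ∀ {m m'}, m ≤ m' → s m ≤ s m' := by
    intro m m' h
    apply Finset.sum_le_sum_of_subset_of_nonneg (Finset.range_subset_range.2 h)
    intros; positivity
  have hslt : ∀ m m', m < m' → inSwitch β (y m) → s m < s m' := by
    intro m m' h hsw
    have h1 : s (m + 1) = s m + 1 := by rw [hssucc, if_pos hsw]
    have h2 : s (m + 1) ≤ s m' := hsmono h
    omega
  set ω : ℕ → Bool :=
    fun j => if ∃ m, inSwitch β (y m) ∧ s m = j ∧ a m = ldigit β (y m) then false else true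
    with hω
  have hkey : ∀ m, rdigit β (fun k => ω (k + s m)) (y m) = a m := by
    intro m
    by_cases hsw : inSwitch β (y m)
    · by_cases hl : a m = ldigit β (y m)
      · have hω0 : ω (s m) = false := by
          simp only [hω]
          rw [if_pos ⟨m, hsw, rfl, hl⟩]
        rw [rdigit, if_pos ⟨hsw, by show ω (0 + s m) = false; rw [Nat.zero_add]; exact hω0⟩]
        exact hl.symm
      · have hω0 : ω (s m) = true := by
          simp only [hω]
          rw [if_neg]
          rintro ⟨m', hsw', hs', hl'⟩
          rcases eq_or_ne m' m with rfl | hne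
          · exact hl hl'
          · rcases hne.lt_or_gt with h | h
            · exact absurd hs' (hslt m' m h hsw').ne
            · exact absurd hs'.symm (hslt m m' h hsw).ne
        rw [rdigit, if_neg]
        · rcases (hdig m).2 with h | h
          · exact absurd h hl
          · exact h.symm
        · rintro ⟨-, hc⟩
          have hc' : ω (0 + s m) = false := hc
          rw [Nat.zero_add, hω0] at hc'
          simp at hc'
    · rw [rdigit, if_neg (by tauto)]
      exact ((hdig m).1 hsw).symm
  have horb : ∀ m, (kmap β)^[m] (ω, x) = (fun k => ω (k + s m), y m) := by
    intro m
    induction m with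
    | zero =>
      simp only [Function.iterate_zero_apply, hs0, hy0]
      exact Prod.ext (funext fun k => by show ω k = ω (k + 0); rw [Nat.add_zero]) rfl
    | succ m ih =>
      rw [Function.iterate_succ_apply', ih]
      refine Prod.ext ?_ ?_
      · show (if inSwitch β (y m) then (fun n => ω ((n + 1) + s m)) else (fun k => ω (k + s m)))
            = fun k => ω (k + s (m + 1))
        by_cases hsw : inSwitch β (y m)
        · rw [if_pos hsw]
          funext k
          rw [hssucc, if_pos hsw]
          congr 1
          omega
        · rw [if_neg hsw]
          funext k
          rw [hssucc, if_neg hsw]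
          norm_num
      · show β * y m - rdigit β (fun k => ω (k + s m)) (y m) = y (m + 1)
        rw [hkey m]
        linarith [hrec m]
  refine ⟨ω, fun i => ?_⟩
  rw [rdig, horb i]
  exact (hkey i).symm
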